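/- For every natural number M ≥ 1 and every real α ≥ M, it holds that ∑_{i=0}^{M−1} α^i/i! ≤ α^M/(M−1)!. Consequently the derivative Φ'(α) = e^{−α}(∑_{i=0}^{M−1} α^i/i! − α^M/(M−1)!) of Φ(α) := e^{−α}∑_{i=1}^{M} α^i/(i−1)! is ≤ 0 for α ≥ M, so Φ is nonincreasing on [M, ∞). -/

import Mathlib

/-- `Φ(α) = e^{-α} ∑_{x=1}^{M} α^x/(x-1)!`, the expected per-slot throughput of
frame slotted Aloha with multipacket reception capacity `M`. -/
noncomputable def Phi (M : ℕ) (α : ℝ) : ℝ :=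
  Real.exp (-α) * ∑ x ∈ Finset.Icc 1 M, α ^ x / (Nat.factorial (x - 1) : ℝ)


lemma Phi_eq (M : ℕ) (α : ℝ) :
    Phi M α = Real.exp (-α) * ∑ i ∈ Finset.range M, α ^ (i+1) / (Nat.factorial i : ℝ) := by
  unfold Phi
  congr 1
  rw [show Finset.Icc 1 M = Finset.Ico 1 (M+1) by rw [Finset.Ico_add_one_right_eq_Icc],
    Finset.sum_Ico_eq_sum_range]
  simp [add_comm 1]

lemma fact_le_aux (i d n : ℕ) (h : i + d ≤ n) :
    (i + d).factorial ≤ i.factorial * n ^ d := by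
  induction d with
  | zero => simp
  | succ d ih =>
    have h' : i + d ≤ n := by omega
    calc (i + (d+1)).factorial = (i + d + 1) * (i + d).factorial := by
          rw [show i + (d+1) = (i+d)+1 by omega, Nat.factorial_succ]
      _ ≤ n * (i.factorial * n ^ d) := Nat.mul_le_mul (by omega) (ih h')
      _ = i.factorial * n ^ (d+1) := by ring

lemma sum_id (α : ℝ) : ∀ M : ℕ, 1 ≤ M →
    ∑ i ∈ Finset.range M,
      (((i:ℝ)+1) * α ^ i / (Nat.factorial i : ℝ) - α ^ (i+1) / (Nat.factorial i : ℝ))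
    = ∑ i ∈ Finset.range M, α ^ i / (Nat.factorial i : ℝ)
        - α ^ M / (Nat.factorial (M - 1) : ℝ) := by
  intro M
  induction M with
  | zero => intro h; omega
  | succ M ih =>
    intro _
    rcases Nat.eq_zero_or_pos M with h0 | hpos
    · subst h0; norm_num
    · rw [Finset.sum_range_succ, Finset.sum_range_succ, ih hpos]
      have hfact : (Nat.factorial M : ℝ) = (M : ℝ) * (Nat.factorial (M-1) : ℝ) := by
        exact_mod_cast (Nat.mul_factorial_pred hpos.ne').symm
      have hf0 : (Nat.factorial (M-1) : ℝ) ≠ 0 := by positivity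
      have hM0 : (M:ℝ) ≠ 0 := Nat.cast_ne_zero.mpr (by omega)
      simp only [Nat.add_sub_cancel]
      field_simp [hfact]
      rw [hfact]; ring
/-- for `M ≥ 1` and `α ≥ M`, `∑_{i=0}^{M-1} α^i/i! ≤ α^M/(M-1)!`;
consequently the derivative `Φ'(α) = e^{-α}(∑_{i=0}^{M-1} α^i/i! - α^M/(M-1)!)` of `Φ`
is `≤ 0` for `α ≥ M`, so `Φ` is nonincreasing on `[M, ∞)`. -/
theorem phi_antitone_right (M : ℕ) (hM : 1 ≤ M) :
    (∀ α : ℝ, (M : ℝ) ≤ α →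
        ∑ i ∈ Finset.range M, α ^ i / (Nat.factorial i : ℝ)
          ≤ α ^ M / (Nat.factorial (M - 1) : ℝ)) ∧
    (∀ α : ℝ, (M : ℝ) ≤ α →
        HasDerivAt (Phi M)
          (Real.exp (-α) * (∑ i ∈ Finset.range M, α ^ i / (Nat.factorial i : ℝ)
            - α ^ M / (Nat.factorial (M - 1) : ℝ))) α) ∧
    (∀ α : ℝ, (M : ℝ) ≤ α →
        Real.exp (-α) * (∑ i ∈ Finset.range M, α ^ i / (Nat.factorial i : ℝ)
          - α ^ M / (Nat.factorial (M - 1) : ℝ)) ≤ 0) ∧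
    AntitoneOn (Phi M) (Set.Ici (M : ℝ)) := by
  have hM1 : (1:ℝ) ≤ (M:ℝ) := by exact_mod_cast hM
  have part1 : ∀ α : ℝ, (M : ℝ) ≤ α →
      ∑ i ∈ Finset.range M, α ^ i / (Nat.factorial i : ℝ)
        ≤ α ^ M / (Nat.factorial (M - 1) : ℝ) := by
    intro α hα
    have hα0 : (0:ℝ) ≤ α := by linarith
    have key : ∀ i ∈ Finset.range M,
        α ^ i / (Nat.factorial i : ℝ) ≤ α ^ (M-1) / (Nat.factorial (M-1) : ℝ) := by
      intro i hi
      rw [Finset.mem_range] at hi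
      set d := M - 1 - i with hd
      have hMd : M - 1 = i + d := by omega
      have hfl : (M-1).factorial ≤ i.factorial * M ^ d := by
        rw [hMd]; exact fact_le_aux i d M (by omega)
      have h1 : ((M-1).factorial : ℝ) ≤ (i.factorial : ℝ) * α ^ d := by
        calc ((M-1).factorial : ℝ) ≤ (i.factorial : ℝ) * (M:ℝ) ^ d := by exact_mod_cast hfl
          _ ≤ (i.factorial : ℝ) * α ^ d :=
              mul_le_mul_of_nonneg_left (pow_le_pow_left₀ (by positivity) hα d) (by positivity)
      rw [div_le_div_iff₀ (by positivity) (by positivity)]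
      calc α ^ i * ((M-1).factorial : ℝ)
          ≤ α ^ i * ((i.factorial:ℝ) * α ^ d) :=
            mul_le_mul_of_nonneg_left h1 (by positivity)
        _ = α ^ (M-1) * (i.factorial:ℝ) := by rw [hMd, pow_add]; ring
    calc ∑ i ∈ Finset.range M, α ^ i / (Nat.factorial i : ℝ)
        ≤ ∑ _i ∈ Finset.range M, α ^ (M-1) / (Nat.factorial (M-1) : ℝ) :=
          Finset.sum_le_sum key
      _ = (M:ℝ) * (α ^ (M-1) / (Nat.factorial (M-1) : ℝ)) := by
          rw [Finset.sum_const, Finset.card_range, nsmul_eq_mul]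
      _ ≤ α * (α ^ (M-1) / (Nat.factorial (M-1) : ℝ)) :=
          mul_le_mul_of_nonneg_right hα (by positivity)
      _ = α ^ M / (Nat.factorial (M-1) : ℝ) := by
          rw [← mul_div_assoc, ← pow_succ', show M-1+1 = M by omega]
  have part2 : ∀ α : ℝ, (M : ℝ) ≤ α →
      HasDerivAt (Phi M)
        (Real.exp (-α) * (∑ i ∈ Finset.range M, α ^ i / (Nat.factorial i : ℝ)
          - α ^ M / (Nat.factorial (M - 1) : ℝ))) α := by
    intro α _
    have hsum : HasDerivAt (fun x : ℝ => ∑ i ∈ Finset.range M, x ^ (i+1) / (Nat.factorial i : ℝ))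
        (∑ i ∈ Finset.range M, ((i:ℝ)+1) * α ^ i / (Nat.factorial i : ℝ)) α := by
      apply HasDerivAt.fun_sum
      intro i _
      have := (hasDerivAt_pow (i+1) α).div_const (Nat.factorial i : ℝ)
      simpa [mul_comm, mul_div_assoc] using this
    have hexp : HasDerivAt (fun x : ℝ => Real.exp (-x)) (-Real.exp (-α)) α := by
      simpa [Function.comp_def] using (Real.hasDerivAt_exp (-α)).comp α (hasDerivAt_neg α)
    have key : -Real.exp (-α) * (∑ i ∈ Finset.range M, α ^ (i+1) / (Nat.factorial i : ℝ))
        + Real.exp (-α) * (∑ i ∈ Finset.range M, ((i:ℝ)+1) * α ^ i / (Nat.factorial i : ℝ))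
        = Real.exp (-α) * (∑ i ∈ Finset.range M, α ^ i / (Nat.factorial i : ℝ)
          - α ^ M / (Nat.factorial (M - 1) : ℝ)) := by
      rw [← sum_id α M hM, Finset.sum_sub_distrib]; ring
    have hfun : Phi M = fun x => Real.exp (-x) *
        ∑ i ∈ Finset.range M, x ^ (i+1) / (Nat.factorial i : ℝ) := funext fun x => Phi_eq M x
    rw [hfun, ← key]
    exact hexp.mul hsum
  have part3 : ∀ α : ℝ, (M : ℝ) ≤ α →
      Real.exp (-α) * (∑ i ∈ Finset.range M, α ^ i / (Nat.factorial i : ℝ)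
        - α ^ M / (Nat.factorial (M - 1) : ℝ)) ≤ 0 := by
    intro α hα
    have h := sub_nonpos.mpr (part1 α hα)
    have he := Real.exp_pos (-α)
    nlinarith
  refine ⟨part1, part2, part3, ?_⟩
  have hcont : Continuous (Phi M) := by
    unfold Phi
    exact (Real.continuous_exp.comp continuous_neg).mul
      (continuous_finset_sum _ fun i _ => (continuous_pow i).div_const _)
  apply antitoneOn_of_deriv_nonpos (convex_Ici _) hcont.continuousOn
  · intro x hx
    rw [interior_Ici] at hx
    exact (part2 x (le_of_lt hx)).differentiableAt.differentiableWithinAt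
  · intro x hx
    rw [interior_Ici] at hx
    rw [(part2 x (le_of_lt hx)).deriv]
    exact part3 x (le_of_lt hx)
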